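/- For every s ∈ (0,1) and every x > 0, the identity (Γ(1−s)/s) · x^s = ∫₀^∞ (1 − exp(−x u)) / u^{s+1} du holds. -/

import Mathlib

open Real MeasureTheory Set Filter Topology

/-- (Γ(1−s)/s) x^s = ∫₀^∞ (1 − e^{−xu})/u^{s+1} du for s ∈ (0,1), x > 0. -/
theorem gamma_frac_identity (s x : ℝ) (hs : s ∈ Set.Ioo (0 : ℝ) 1) (hx : 0 < x) :
    Real.Gamma (1 - s) / s * x ^ s
      = ∫ u in Set.Ioi (0 : ℝ), (1 - Real.exp (-(x * u))) / u ^ (s + 1) := by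
  obtain ⟨hs0, hs1⟩ := hs
  set u : ℝ → ℝ := fun t => 1 - Real.exp (-(x * t)) with hu_def
  set u' : ℝ → ℝ := fun t => x * Real.exp (-(x * t)) with hu'_def
  set v : ℝ → ℝ := fun t => -(t ^ (-s)) / s with hv_def
  set v' : ℝ → ℝ := fun t => t ^ (-(s+1)) with hv'_def
  have hu : ∀ t ∈ Ioi (0:ℝ), HasDerivAt u (u' t) t := by
    intro t _
    have h1 : HasDerivAt (fun t : ℝ => -(x * t)) (-x) t := by
      simpa [Pi.neg_def] using ((hasDerivAt_id t).const_mul x).neg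
    have := h1.exp
    simpa [hu_def, hu'_def, mul_comm] using (this.const_sub 1)
  have hv : ∀ t ∈ Ioi (0:ℝ), HasDerivAt v (v' t) t := by
    intro t ht
    have h1 : HasDerivAt (fun t : ℝ => t ^ (-s)) (-s * t ^ (-s - 1)) t :=
      Real.hasDerivAt_rpow_const (Or.inl (ne_of_gt ht))
    have h2 : HasDerivAt v (-(-s * t ^ (-s - 1)) / s) t := h1.neg.div_const s
    have heq : -(-s * t ^ (-s - 1)) / s = v' t := by
      simp only [hv'_def]
      rw [show -(s+1) = -s - 1 by ring]
      field_simp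
    exact heq ▸ h2
  -- integrability of u * v'
  have huv' : IntegrableOn (u * v') (Ioi (0:ℝ)) := by
    have h1 : IntegrableOn (u * v') (Ioc (0:ℝ) 1) := by
      have hbig : IntegrableOn (fun t : ℝ => x * t ^ (-s)) (Ioc (0:ℝ) 1) := by
        have hb0 : IntegrableOn (fun t : ℝ => t ^ (-s)) (Ioc (0:ℝ) 1) := by
          rw [← intervalIntegrable_iff_integrableOn_Ioc_of_le zero_le_one]
          apply intervalIntegral.intervalIntegrable_rpow'
          linarith
        exact hb0.const_mul x
      refine Integrable.mono hbig ?_ ?_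
      · refine ContinuousOn.aestronglyMeasurable ?_ measurableSet_Ioc
        apply ContinuousOn.mul
        · exact (continuous_const.sub (((continuous_const.mul continuous_id).neg).rexp)).continuousOn
        · exact continuousOn_id.rpow_const (fun t ht => Or.inl (ne_of_gt ht.1))
      · filter_upwards [ae_restrict_mem measurableSet_Ioc] with t ht
        simp only [Pi.mul_apply, hu_def, hv'_def]
        have ht0 : (0:ℝ) < t := ht.1
        have hsub : 0 ≤ 1 - Real.exp (-(x * t)) := by
          simp [Real.exp_le_one_iff]
          positivity
        have hle : 1 - Real.exp (-(x * t)) ≤ x * t := by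
          have := Real.add_one_le_exp (-(x * t))
          nlinarith [Real.exp_pos (-(x*t))]
        have hv'pos : (0:ℝ) ≤ t ^ (-(s+1)) := Real.rpow_nonneg ht0.le _
        rw [Real.norm_eq_abs, Real.norm_eq_abs, abs_of_nonneg (by positivity : (0:ℝ) ≤ x * t ^ (-s)),
          abs_of_nonneg (mul_nonneg hsub hv'pos)]
        calc (1 - rexp (-(x * t))) * t ^ (-(s+1)) ≤ (x * t) * t ^ (-(s+1)) := by
              exact mul_le_mul_of_nonneg_right hle hv'pos
          _ = x * t ^ (-s) := by
              rw [mul_assoc]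
              congr 1
              calc t * t ^ (-(s+1)) = t ^ (1:ℝ) * t ^ (-(s+1)) := by rw [Real.rpow_one]
                _ = t ^ (1 + -(s+1)) := (Real.rpow_add ht0 _ _).symm
                _ = t ^ (-s) := by norm_num
      -- done h1
    have h2 : IntegrableOn (u * v') (Ioi (1:ℝ)) := by
      have hbig : IntegrableOn (fun t : ℝ => t ^ (-(s+1))) (Ioi (1:ℝ)) := by
        apply integrableOn_Ioi_rpow_of_lt (by linarith) one_pos
      refine Integrable.mono hbig ?_ ?_
      · refine ContinuousOn.aestronglyMeasurable ?_ measurableSet_Ioi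
        apply ContinuousOn.mul
        · exact (continuous_const.sub (((continuous_const.mul continuous_id).neg).rexp)).continuousOn
        · exact continuousOn_id.rpow_const (fun t ht => Or.inl (ne_of_gt (lt_trans one_pos ht)))
      · filter_upwards [ae_restrict_mem measurableSet_Ioi] with t ht
        simp only [Pi.mul_apply, hu_def, hv'_def]
        have ht0 : (0:ℝ) < t := lt_trans one_pos ht
        have hsub : 0 ≤ 1 - Real.exp (-(x * t)) := by
          simp [Real.exp_le_one_iff]
          positivity
        have hle : 1 - Real.exp (-(x * t)) ≤ 1 := by
          have := Real.exp_pos (-(x*t)); linarith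
        have hv'pos : (0:ℝ) ≤ t ^ (-(s+1)) := Real.rpow_nonneg ht0.le _
        rw [Real.norm_eq_abs, Real.norm_eq_abs, abs_of_nonneg hv'pos,
          abs_of_nonneg (mul_nonneg hsub hv'pos)]
        calc (1 - rexp (-(x * t))) * t ^ (-(s+1)) ≤ 1 * t ^ (-(s+1)) := mul_le_mul_of_nonneg_right hle hv'pos
          _ = t ^ (-(s+1)) := one_mul _
    have : Ioi (0:ℝ) = Ioc 0 1 ∪ Ioi 1 := (Ioc_union_Ioi_eq_Ioi zero_le_one).symm
    rw [this]
    exact h1.union h2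
  -- integrability of u' * v
  have hGammaInt : IntegrableOn (fun t : ℝ => t ^ (-s) * Real.exp (-(x * t))) (Ioi (0:ℝ)) := by
    have := integrableOn_rpow_mul_exp_neg_mul_rpow (p := 1) (s := -s) (b := x)
      (by linarith) one_pos hx
    simpa using this
  have hs0' : s ≠ 0 := ne_of_gt hs0
  have hu'v : IntegrableOn (u' * v) (Ioi (0:ℝ)) := by
    have : (u' * v) = fun t => (-(x/s)) * (t ^ (-s) * Real.exp (-(x*t))) := by
      funext t
      simp only [hu'_def, hv_def, Pi.mul_apply]
      field_simp
    rw [this]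
    exact hGammaInt.const_mul _
  -- limit at 0
  have h_zero : Tendsto (u * v) (nhdsWithin 0 (Ioi (0:ℝ))) (𝓝 0) := by
    have hupper : ∀ t ∈ Ioi (0:ℝ), u t * v t ≤ 0 := by
      intro t ht
      have ht0 : (0:ℝ) < t := ht
      have hsub : 0 ≤ 1 - Real.exp (-(x * t)) := by
        simp [Real.exp_le_one_iff]
        positivity
      have : v t ≤ 0 := by
        have : (0:ℝ) ≤ t ^ (-s) := Real.rpow_nonneg (le_of_lt ht) _
        simp only [hv_def]
        apply div_nonpos_of_nonpos_of_nonneg <;> linarith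
      exact mul_nonpos_of_nonneg_of_nonpos hsub this
    have hlower : ∀ t ∈ Ioi (0:ℝ), -(x / s) * t ^ (1 - s) ≤ u t * v t := by
      intro t ht
      have ht0 : (0:ℝ) < t := ht
      have hle : 1 - Real.exp (-(x * t)) ≤ x * t := by
        have := Real.add_one_le_exp (-(x * t))
        nlinarith [Real.exp_pos (-(x*t))]
      have hsub : 0 ≤ 1 - Real.exp (-(x * t)) := by
        simp [Real.exp_le_one_iff]
        positivity
      have hrp : (0:ℝ) ≤ t ^ (-s) := Real.rpow_nonneg ht0.le _
      have key : u t * (t ^ (-s)) ≤ (x * t) * t ^ (-s) :=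
        mul_le_mul_of_nonneg_right hle hrp
      have hts : (x * t) * t ^ (-s) = x * t ^ (1 - s) := by
        rw [mul_assoc]
        congr 1
        calc t * t ^ (-s) = t ^ (1:ℝ) * t ^ (-s) := by rw [Real.rpow_one]
          _ = t ^ (1 + -s) := (Real.rpow_add ht0 _ _).symm
          _ = t ^ (1 - s) := by norm_num [sub_eq_add_neg]
      have hkey2 : u t * t ^ (-s) ≤ x * t ^ (1-s) := hts ▸ key
      have hvt : u t * v t = -(u t * t ^ (-s)) * (1/s) := by
        simp only [hv_def]; ring
      rw [hvt, show -(x / s) * t ^ (1 - s) = -(x * t ^ (1-s)) * (1/s) from by ring]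
      exact mul_le_mul_of_nonneg_right (neg_le_neg hkey2) (by positivity)
    have htend : Tendsto (fun t : ℝ => -(x / s) * t ^ (1 - s)) (nhdsWithin 0 (Ioi (0:ℝ))) (𝓝 0) := by
      have : ContinuousWithinAt (fun t : ℝ => t ^ (1 - s)) (Ioi 0) 0 := by
        apply ContinuousAt.continuousWithinAt
        apply Real.continuousAt_rpow_const
        right; linarith
      have h0 : (0:ℝ) ^ (1 - s) = 0 := Real.zero_rpow (by linarith)
      have := (this.const_smul (-(x/s))).tendsto
      simpa [h0, Pi.smul_def, Pi.neg_def, smul_eq_mul] using this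
    apply tendsto_of_tendsto_of_tendsto_of_le_of_le' htend tendsto_const_nhds
    · filter_upwards [self_mem_nhdsWithin] with t ht using hlower t ht
    · filter_upwards [self_mem_nhdsWithin] with t ht using hupper t ht
  -- limit at infinity
  have h_infty : Tendsto (u * v) atTop (𝓝 0) := by
    have h1 : Tendsto u atTop (𝓝 1) := by
      have h0 : Tendsto (fun t : ℝ => x * t) atTop atTop :=
        Filter.Tendsto.const_mul_atTop hx tendsto_id
      have h0' : Tendsto (fun t : ℝ => -(x * t)) atTop atBot :=
        tendsto_neg_atTop_atBot.comp h0
      have := Real.tendsto_exp_atBot.comp h0' 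
      simpa [hu_def] using (tendsto_const_nhds.sub this)
    have h2 : Tendsto v atTop (𝓝 0) := by
      have := tendsto_rpow_neg_atTop hs0
      have := (this.neg).div_const s
      simpa [hv_def] using this
    have := h1.mul h2
    rw [show (u * v) = fun t => u t * v t from rfl]
    simpa using this
  have hIBP := MeasureTheory.integral_Ioi_mul_deriv_eq_deriv_mul hu hv huv' hu'v h_zero h_infty
  -- compute ∫ u' v
  have hcomp : ∫ t in Ioi (0:ℝ), u' t * v t = -(Real.Gamma (1-s) / s * x ^ s) := by
    have heq : ∀ t ∈ Ioi (0:ℝ), u' t * v t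
        = (-(x/s)) * (t ^ ((1-s) - 1) * Real.exp (-(x * t))) := by
      intro t _
      simp only [hu'_def, hv_def]
      have : (1 - s) - 1 = -s := by ring
      rw [this]
      field_simp
    rw [setIntegral_congr_fun measurableSet_Ioi heq, integral_const_mul,
      integral_rpow_mul_exp_neg_mul_Ioi (by linarith) hx]
    have h1 : ((1:ℝ)/x) ^ (1-s) = x ^ (s-1) := by
      rw [one_div, Real.inv_rpow hx.le, ← Real.rpow_neg hx.le,
        show -(1-s) = s - 1 from by ring]
    rw [h1, show (-(x/s)) * (x ^ (s-1) * Real.Gamma (1-s))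
        = -((x * x ^ (s-1)) * Real.Gamma (1-s)) / s from by ring]
    have h2 : x * x ^ (s-1) = x ^ s := by
      calc x * x ^ (s-1) = x ^ (1:ℝ) * x ^ (s-1) := by rw [Real.rpow_one]
        _ = x ^ (1+(s-1)) := (Real.rpow_add hx _ _).symm
        _ = x ^ s := by norm_num
    rw [h2]; ring
  have hgoal : ∫ t in Ioi (0:ℝ), (1 - Real.exp (-(x*t)))/t^(s+1) = ∫ t in Ioi 0, u t * v' t := by
    apply setIntegral_congr_fun measurableSet_Ioi
    intro t ht
    simp only [hu_def, hv'_def]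
    rw [Real.rpow_neg (le_of_lt ht), div_eq_mul_inv]
  rw [hgoal, hIBP, hcomp]; ring
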